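/- arXiv:2404.10285 — 2 statements merged into one kernel-verified Lean document; each statement's English description precedes it below -/
import Mathlib

section
/- Let 𝒳 : ℝ → ℝⁿ satisfy 𝒳'(t) = A𝒳(t) + B𝒱(t), and let P be symmetric. Define ℳ := −ρP + AᵀP + PA and 𝒩 := BᵀP. Then for any s ≤ s', [e^{−ρs'} 𝒳(s')‾ᵀ − e^{−ρs} 𝒳(s)‾ᵀ] vecs(P) = (∫_s^{s'} e^{−ρt} 𝒳(t)‾ᵀ dt) vecs(ℳ) + 2(∫_s^{s'} e^{−ρt} (𝒳(t)ᵀ ⊗ 𝒱(t)ᵀ) dt) vec(𝒩). -/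
open Matrix

private lemma sum_half {n : ℕ} (g : Fin n → Fin n → ℝ) (hg : ∀ i j, g i j = g j i) :
    (∑ p : {p : Fin n × Fin n // p.1 ≤ p.2},
      (if (p : Fin n × Fin n).1 = (p : Fin n × Fin n).2 then g (p : Fin n × Fin n).1 (p : Fin n × Fin n).2
       else 2 * g (p : Fin n × Fin n).1 (p : Fin n × Fin n).2)) = ∑ i, ∑ j, g i j := by
  classical
  have h1 : (∑ p : {p : Fin n × Fin n // p.1 ≤ p.2},
      (if (p : Fin n × Fin n).1 = (p : Fin n × Fin n).2 then g (p : Fin n × Fin n).1 (p : Fin n × Fin n).2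
       else 2 * g (p : Fin n × Fin n).1 (p : Fin n × Fin n).2))
      = ∑ p ∈ Finset.univ.filter (fun p : Fin n × Fin n => p.1 ≤ p.2),
          (if p.1 = p.2 then g p.1 p.2 else 2 * g p.1 p.2) :=
    (Finset.sum_subtype (Finset.univ.filter (fun p : Fin n × Fin n => p.1 ≤ p.2))
      (fun p => by simp)
      (fun p : Fin n × Fin n => if p.1 = p.2 then g p.1 p.2 else 2 * g p.1 p.2)).symm
  have h2 : (∑ i, ∑ j, g i j) = ∑ p : Fin n × Fin n, g p.1 p.2 := by
    rw [Fintype.sum_prod_type]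
  rw [h1, h2]
  rw [← Finset.sum_filter_add_sum_filter_not Finset.univ (fun p : Fin n × Fin n => p.1 ≤ p.2)]
  have hsplit : ∀ p : Fin n × Fin n, (if p.1 = p.2 then g p.1 p.2 else 2 * g p.1 p.2)
      = g p.1 p.2 + (if p.1 = p.2 then 0 else g p.1 p.2) := by
    intro p; by_cases h : p.1 = p.2 <;> simp [h]; ring
  simp_rw [hsplit]
  rw [Finset.sum_add_distrib]
  congr 1
  have hflip : ∀ x : Fin n × Fin n, (if x.1 = x.2 then (0:ℝ) else g x.1 x.2)
      = if x.1 ≠ x.2 then g x.1 x.2 else 0 := by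
    intro x; by_cases h : x.1 = x.2 <;> simp [h]
  simp_rw [hflip]
  rw [← Finset.sum_filter]
  rw [Finset.filter_filter]
  apply Finset.sum_nbij' (fun p => (p.2, p.1)) (fun p => (p.2, p.1))
  · intro a ha; simp only [Finset.mem_filter, Finset.mem_univ, true_and] at ha ⊢
    simp only [not_le]; exact lt_of_le_of_ne ha.1 ha.2
  · intro a ha; simp only [Finset.mem_filter, Finset.mem_univ, true_and, not_le] at ha ⊢
    exact ⟨le_of_lt ha, ne_of_lt ha⟩
  · intro a _; rfl
  · intro a _; rfl
  · intro a _; exact hg a.1 a.2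

private lemma quad_sum {n : ℕ} (S : Matrix (Fin n) (Fin n) ℝ) (c : ℝ) (x : Fin n → ℝ) :
    ∑ i, ∑ j, c * (x i * x j) * S i j = c * (x ⬝ᵥ S *ᵥ x) := by
  simp only [dotProduct, mulVec, Finset.mul_sum]
  congr 1; funext i; congr 1; funext j; ring

private lemma deriv_alg {n m : ℕ} (A : Matrix (Fin n) (Fin n) ℝ) (B : Matrix (Fin n) (Fin m) ℝ)
    (ρ : ℝ) (P : Matrix (Fin n) (Fin n) ℝ) (hP : P.IsSymm)
    (M : Matrix (Fin n) (Fin n) ℝ) (hM : M = -(ρ • P) + Aᵀ * P + P * A)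
    (N : Matrix (Fin m) (Fin n) ℝ) (hN : N = Bᵀ * P)
    (x : Fin n → ℝ) (v : Fin m → ℝ) :
    -ρ * (x ⬝ᵥ P *ᵥ x) + ((A *ᵥ x + B *ᵥ v) ⬝ᵥ P *ᵥ x + x ⬝ᵥ P *ᵥ (A *ᵥ x + B *ᵥ v))
      = x ⬝ᵥ M *ᵥ x + 2 * (v ⬝ᵥ N *ᵥ x) := by
  have hPs : Pᵀ = P := hP
  have e1 : x ⬝ᵥ (Aᵀ * P) *ᵥ x = (A *ᵥ x) ⬝ᵥ (P *ᵥ x) := by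
    rw [← mulVec_mulVec, dotProduct_mulVec, vecMul_transpose]
  have e2 : v ⬝ᵥ N *ᵥ x = (B *ᵥ v) ⬝ᵥ (P *ᵥ x) := by
    rw [hN, ← mulVec_mulVec, dotProduct_mulVec, vecMul_transpose]
  have e3 : x ⬝ᵥ P *ᵥ (B *ᵥ v) = v ⬝ᵥ N *ᵥ x := by
    rw [dotProduct_mulVec, ← mulVec_transpose, hPs, dotProduct_comm, ← e2]
  rw [add_dotProduct, mulVec_add, dotProduct_add, mulVec_mulVec, ← e1, e3, hM]
  rw [Matrix.add_mulVec, Matrix.add_mulVec, dotProduct_add, dotProduct_add,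
    Matrix.neg_mulVec, dotProduct_neg, Matrix.smul_mulVec, dotProduct_smul,
    smul_eq_mul, e2]
  ring

private lemma cross_sum {n m : ℕ} (N : Matrix (Fin m) (Fin n) ℝ) (c : ℝ) (x : Fin n → ℝ)
    (v : Fin m → ℝ) : ∑ i, ∑ j, c * (x i * v j) * N j i = c * (v ⬝ᵥ N *ᵥ x) := by
  rw [Finset.sum_comm]
  simp only [dotProduct, mulVec, Finset.mul_sum]
  congr 1; funext j; congr 1; funext i; ring

private lemma deriv_g {n m : ℕ} (A : Matrix (Fin n) (Fin n) ℝ) (B : Matrix (Fin n) (Fin m) ℝ)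
    (ρ : ℝ) (X : ℝ → Fin n → ℝ) (V : ℝ → Fin m → ℝ)
    (hX : ∀ t, HasDerivAt X (A *ᵥ X t + B *ᵥ V t) t)
    (P : Matrix (Fin n) (Fin n) ℝ) (hP : P.IsSymm)
    (M : Matrix (Fin n) (Fin n) ℝ) (hM : M = -(ρ • P) + Aᵀ * P + P * A)
    (N : Matrix (Fin m) (Fin n) ℝ) (hN : N = Bᵀ * P) (t : ℝ) :
    HasDerivAt (fun t => Real.exp (-ρ * t) * (X t ⬝ᵥ P *ᵥ X t))
      (Real.exp (-ρ * t) * (X t ⬝ᵥ M *ᵥ X t) + 2 * (Real.exp (-ρ * t) * (V t ⬝ᵥ N *ᵥ X t))) t := by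
  set D : Fin n → ℝ := A *ᵥ X t + B *ᵥ V t with hD
  have hxi : ∀ i, HasDerivAt (fun t => X t i) (D i) t := fun i => hasDerivAt_pi.mp (hX t) i
  have hq' : HasDerivAt (fun t => ∑ i, ∑ j, X t i * (P i j * X t j))
      (∑ i, ∑ j, (D i * (P i j * X t j) + X t i * (P i j * D j))) t :=
    HasDerivAt.fun_sum fun i _ => HasDerivAt.fun_sum fun j _ => ((hxi i).mul ((hxi j).const_mul (P i j)))
  have hqfun : (fun t => X t ⬝ᵥ P *ᵥ X t) = fun t => ∑ i, ∑ j, X t i * (P i j * X t j) := by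
    funext u; simp [dotProduct, mulVec, Finset.mul_sum]
  have hqval : (∑ i, ∑ j, (D i * (P i j * X t j) + X t i * (P i j * D j)))
      = D ⬝ᵥ P *ᵥ X t + X t ⬝ᵥ P *ᵥ D := by
    simp [dotProduct, mulVec, Finset.mul_sum, Finset.sum_add_distrib]
  have hq : HasDerivAt (fun t => X t ⬝ᵥ P *ᵥ X t) (D ⬝ᵥ P *ᵥ X t + X t ⬝ᵥ P *ᵥ D) t := by
    rw [hqfun, ← hqval]; exact hq'
  have hE : HasDerivAt (fun t => Real.exp (-ρ * t)) (-ρ * Real.exp (-ρ * t)) t := by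
    simpa [mul_comm] using ((hasDerivAt_id t).const_mul (-ρ)).exp
  have := hE.fun_mul hq
  refine this.congr_deriv ?_
  have halg := deriv_alg A B ρ P hP M hM N hN (X t) (V t)
  rw [hD]
  linear_combination (Real.exp (-ρ * t)) * halg

theorem stmt17 {n m : ℕ} (A : Matrix (Fin n) (Fin n) ℝ) (B : Matrix (Fin n) (Fin m) ℝ) (ρ : ℝ)
    (X : ℝ → Fin n → ℝ) (V : ℝ → Fin m → ℝ) (hV : Continuous V)
    (hX : ∀ t, HasDerivAt X (A *ᵥ X t + B *ᵥ V t) t)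
    (P : Matrix (Fin n) (Fin n) ℝ) (hP : P.IsSymm)
    (M : Matrix (Fin n) (Fin n) ℝ) (hM : M = -(ρ • P) + Aᵀ * P + P * A)
    (N : Matrix (Fin m) (Fin n) ℝ) (hN : N = Bᵀ * P)
    (s s' : ℝ) (hss : s ≤ s') :
    (fun p : {p : Fin n × Fin n // p.1 ≤ p.2} =>
        Real.exp (-ρ * s') * (X s' p.1.1 * X s' p.1.2) -
          Real.exp (-ρ * s) * (X s p.1.1 * X s p.1.2)) ⬝ᵥ
      (fun p : {p : Fin n × Fin n // p.1 ≤ p.2} =>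
        if p.1.1 = p.1.2 then P p.1.1 p.1.2 else 2 * P p.1.1 p.1.2) =
    (fun p : {p : Fin n × Fin n // p.1 ≤ p.2} =>
        ∫ t in s..s', Real.exp (-ρ * t) * (X t p.1.1 * X t p.1.2)) ⬝ᵥ
      (fun p : {p : Fin n × Fin n // p.1 ≤ p.2} =>
        if p.1.1 = p.1.2 then M p.1.1 p.1.2 else 2 * M p.1.1 p.1.2) +
    2 * ((fun p : Fin n × Fin m =>
        ∫ t in s..s', Real.exp (-ρ * t) * (X t p.1 * V t p.2)) ⬝ᵥ
      (fun p : Fin n × Fin m => N p.2 p.1)) := by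
  classical
  have hXc : Continuous X := by
    rw [continuous_iff_continuousAt]; exact fun t => (hX t).continuousAt
  have hXi : ∀ i, Continuous fun t => X t i := fun i => (continuous_apply i).comp hXc
  have hVi : ∀ j, Continuous fun t => V t j := fun j => (continuous_apply j).comp hV
  have hEc : Continuous fun t : ℝ => Real.exp (-ρ * t) :=
    Real.continuous_exp.comp (continuous_const.mul continuous_id)
  have hPsym : ∀ i j, P j i = P i j := fun i j => congrFun (congrFun hP i) j
  have hMt : Mᵀ = M := by
    rw [hM]
    simp only [Matrix.transpose_add, Matrix.transpose_neg, Matrix.transpose_smul,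
      Matrix.transpose_mul, Matrix.transpose_transpose, hP.eq]
    abel
  have hMsym : ∀ i j, M j i = M i j := fun i j => congrFun (congrFun hMt i) j
  -- continuity of the two parts of the derivative
  have hcont1 : Continuous fun t => Real.exp (-ρ * t) * (X t ⬝ᵥ M *ᵥ X t) :=
    hEc.mul (hXc.dotProduct (continuous_const.matrix_mulVec hXc))
  have hcont2 : Continuous fun t => Real.exp (-ρ * t) * (V t ⬝ᵥ N *ᵥ X t) :=
    hEc.mul (hV.dotProduct (continuous_const.matrix_mulVec hXc))
  have key : (∫ t in s..s', (Real.exp (-ρ * t) * (X t ⬝ᵥ M *ᵥ X t) +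
        2 * (Real.exp (-ρ * t) * (V t ⬝ᵥ N *ᵥ X t))))
      = Real.exp (-ρ * s') * (X s' ⬝ᵥ P *ᵥ X s')
        - Real.exp (-ρ * s) * (X s ⬝ᵥ P *ᵥ X s) :=
    intervalIntegral.integral_eq_sub_of_hasDerivAt
      (fun t _ => deriv_g A B ρ X V hX P hP M hM N hN t)
      ((hcont1.add (continuous_const.mul hcont2)).intervalIntegrable _ _)
  have hsplit := intervalIntegral.integral_add (μ := MeasureTheory.volume) (a := s) (b := s')
    (f := fun t => Real.exp (-ρ * t) * (X t ⬝ᵥ M *ᵥ X t))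
    (g := fun t => 2 * (Real.exp (-ρ * t) * (V t ⬝ᵥ N *ᵥ X t)))
    (hcont1.intervalIntegrable _ _) ((continuous_const.mul hcont2).intervalIntegrable _ _)
  rw [hsplit] at key
  rw [intervalIntegral.integral_const_mul] at key
  -- LHS
  have lhs_eq : (fun p : {p : Fin n × Fin n // p.1 ≤ p.2} =>
        Real.exp (-ρ * s') * (X s' p.1.1 * X s' p.1.2) -
          Real.exp (-ρ * s) * (X s p.1.1 * X s p.1.2)) ⬝ᵥ
      (fun p : {p : Fin n × Fin n // p.1 ≤ p.2} =>
        if p.1.1 = p.1.2 then P p.1.1 p.1.2 else 2 * P p.1.1 p.1.2)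
      = Real.exp (-ρ * s') * (X s' ⬝ᵥ P *ᵥ X s')
        - Real.exp (-ρ * s) * (X s ⬝ᵥ P *ᵥ X s) := by
    have := sum_half (fun i j => (Real.exp (-ρ * s') * (X s' i * X s' j) -
        Real.exp (-ρ * s) * (X s i * X s j)) * P i j)
      (fun i j => by rw [hPsym i j]; ring)
    simp only [dotProduct]
    rw [show (∑ p : {p : Fin n × Fin n // p.1 ≤ p.2},
        (Real.exp (-ρ * s') * (X s' (p : Fin n × Fin n).1 * X s' (p : Fin n × Fin n).2) -
          Real.exp (-ρ * s) * (X s (p : Fin n × Fin n).1 * X s (p : Fin n × Fin n).2)) *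
        (if (p : Fin n × Fin n).1 = (p : Fin n × Fin n).2 then P (p : Fin n × Fin n).1 (p : Fin n × Fin n).2
         else 2 * P (p : Fin n × Fin n).1 (p : Fin n × Fin n).2))
        = ∑ p : {p : Fin n × Fin n // p.1 ≤ p.2},
        (if (p : Fin n × Fin n).1 = (p : Fin n × Fin n).2 then
          (Real.exp (-ρ * s') * (X s' (p : Fin n × Fin n).1 * X s' (p : Fin n × Fin n).2) -
            Real.exp (-ρ * s) * (X s (p : Fin n × Fin n).1 * X s (p : Fin n × Fin n).2)) * P (p : Fin n × Fin n).1 (p : Fin n × Fin n).2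
         else 2 * ((Real.exp (-ρ * s') * (X s' (p : Fin n × Fin n).1 * X s' (p : Fin n × Fin n).2) -
            Real.exp (-ρ * s) * (X s (p : Fin n × Fin n).1 * X s (p : Fin n × Fin n).2)) * P (p : Fin n × Fin n).1 (p : Fin n × Fin n).2))
        from Finset.sum_congr rfl fun p _ => by split_ifs <;> ring, this]
    simp_rw [sub_mul, Finset.sum_sub_distrib, quad_sum]
    simp [dotProduct]
  rw [lhs_eq, ← key]
  congr 1
  -- M term
  · have := sum_half (fun i j => (∫ t in s..s', Real.exp (-ρ * t) * (X t i * X t j)) * M i j)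
      (fun i j => by
        rw [hMsym i j]
        congr 1
        refine intervalIntegral.integral_congr fun t _ => by ring)
    simp only [dotProduct]
    rw [show (∑ p : {p : Fin n × Fin n // p.1 ≤ p.2},
        (∫ t in s..s', Real.exp (-ρ * t) * (X t (p : Fin n × Fin n).1 * X t (p : Fin n × Fin n).2)) *
        (if (p : Fin n × Fin n).1 = (p : Fin n × Fin n).2 then M (p : Fin n × Fin n).1 (p : Fin n × Fin n).2
         else 2 * M (p : Fin n × Fin n).1 (p : Fin n × Fin n).2))
        = ∑ p : {p : Fin n × Fin n // p.1 ≤ p.2},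
        (if (p : Fin n × Fin n).1 = (p : Fin n × Fin n).2 then
          (∫ t in s..s', Real.exp (-ρ * t) * (X t (p : Fin n × Fin n).1 * X t (p : Fin n × Fin n).2)) * M (p : Fin n × Fin n).1 (p : Fin n × Fin n).2
         else 2 * ((∫ t in s..s', Real.exp (-ρ * t) * (X t (p : Fin n × Fin n).1 * X t (p : Fin n × Fin n).2)) * M (p : Fin n × Fin n).1 (p : Fin n × Fin n).2))
        from Finset.sum_congr rfl fun p _ => by split_ifs <;> ring, this]
    have h1 : ∀ i j : Fin n, (∫ t in s..s', Real.exp (-ρ * t) * (X t i * X t j)) * M i j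
        = ∫ t in s..s', Real.exp (-ρ * t) * (X t i * X t j) * M i j := fun i j =>
      (intervalIntegral.integral_mul_const _ _).symm
    simp_rw [h1]
    have h2 : ∀ i : Fin n, (∑ j, ∫ t in s..s', Real.exp (-ρ * t) * (X t i * X t j) * M i j)
        = ∫ t in s..s', ∑ j, Real.exp (-ρ * t) * (X t i * X t j) * M i j := fun i =>
      (intervalIntegral.integral_finset_sum (fun j _ =>
        ((hEc.mul ((hXi i).mul (hXi j))).mul continuous_const).intervalIntegrable _ _)).symm
    simp_rw [h2]
    rw [← intervalIntegral.integral_finset_sum (f := fun i t => ∑ j, Real.exp (-ρ * t) * (X t i * X t j) * M i j) (fun i _ =>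
      (continuous_finset_sum _ fun j _ =>
        (hEc.mul ((hXi i).mul (hXi j))).mul continuous_const).intervalIntegrable _ _)]
    exact (intervalIntegral.integral_congr fun t _ => quad_sum M (Real.exp (-ρ * t)) (X t)).symm
  · congr 1
    simp only [dotProduct]
    rw [Fintype.sum_prod_type]
    have h1 : ∀ (i : Fin n) (j : Fin m), (∫ t in s..s', Real.exp (-ρ * t) * (X t i * V t j)) * N j i
        = ∫ t in s..s', Real.exp (-ρ * t) * (X t i * V t j) * N j i := fun i j =>
      (intervalIntegral.integral_mul_const _ _).symm
    simp_rw [h1]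
    have h2 : ∀ i : Fin n, (∑ j, ∫ t in s..s', Real.exp (-ρ * t) * (X t i * V t j) * N j i)
        = ∫ t in s..s', ∑ j, Real.exp (-ρ * t) * (X t i * V t j) * N j i := fun i =>
      (intervalIntegral.integral_finset_sum (fun j _ =>
        ((hEc.mul ((hXi i).mul (hVi j))).mul continuous_const).intervalIntegrable _ _)).symm
    simp_rw [h2]
    rw [← intervalIntegral.integral_finset_sum (f := fun i t => ∑ j, Real.exp (-ρ * t) * (X t i * V t j) * N j i) (fun i _ =>
      (continuous_finset_sum _ fun j _ =>
        (hEc.mul ((hXi i).mul (hVi j))).mul continuous_const).intervalIntegrable _ _)]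
    exact (intervalIntegral.integral_congr fun t _ => cross_sum N (Real.exp (-ρ * t)) (X t) (V t)).symm
end

section
/- Let A ∈ ℝ^{n×n} with A − (ρ/2)Iₙ Hurwitz, and let the ARE ρY = YA + AᵀY − YBR⁻¹BᵀY have a positive semidefinite solution Y such that A − BR⁻¹BᵀY − (ρ/2)Iₙ is Hurwitz. Then Y = 0. -/
open Matrix

def IsHurwitz {n : ℕ} (M : Matrix (Fin n) (Fin n) ℝ) : Prop :=
  ∀ μ ∈ spectrum ℂ (M.map (Complex.ofReal)), μ.re < 0

open Polynomial in
lemma mem_spectrum_of_root_aux {n : ℕ} (Q : Matrix (Fin n) (Fin n) ℂ) (μ : ℂ)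
    (h : Q.charpoly.IsRoot μ) : μ ∈ spectrum ℂ Q := by
  rw [spectrum.mem_iff]
  intro hu
  have hdet := (Matrix.isUnit_iff_isUnit_det _).mp hu
  have heval : Q.charpoly.eval μ = (algebraMap ℂ (Matrix (Fin n) (Fin n) ℂ) μ - Q).det := by
    rw [Matrix.charpoly, eval_det, Matrix.matPolyEquiv_charmatrix, Polynomial.eval_sub,
      Polynomial.eval_X, Polynomial.eval_C]
    rfl
  rw [IsRoot, heval] at h
  rw [h] at hdet
  exact hdet.ne_zero rfl

lemma spectrum_transpose_aux {n : ℕ} (M : Matrix (Fin n) (Fin n) ℂ) :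
    spectrum ℂ Mᵀ = spectrum ℂ M := by
  ext μ
  rw [spectrum.mem_iff, spectrum.mem_iff, not_iff_not,
    Matrix.isUnit_iff_isUnit_det, Matrix.isUnit_iff_isUnit_det]
  have : algebraMap ℂ (Matrix (Fin n) (Fin n) ℂ) μ - Mᵀ = (algebraMap ℂ _ μ - M)ᵀ := by
    rw [Matrix.transpose_sub, Algebra.algebraMap_eq_smul_one, Matrix.transpose_smul,
      Matrix.transpose_one]
  rw [this, Matrix.det_transpose]

open Polynomial in
lemma sylvester_zero_aux {n : ℕ} (P Q W : Matrix (Fin n) (Fin n) ℂ)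
    (hP : ∀ μ ∈ spectrum ℂ P, μ.re < 0) (hQ : ∀ μ ∈ spectrum ℂ Q, μ.re < 0)
    (h : P * W + W * Q = 0) : W = 0 := by
  have hXQ : W * Q = (-P) * W := by
    have h1 : W * Q = -(P * W) := eq_neg_of_add_eq_zero_right h
    rw [h1, neg_mul]
  have hpow : ∀ k : ℕ, W * Q ^ k = (-P) ^ k * W := by
    intro k
    induction k with
    | zero => simp
    | succ k ih =>
      rw [pow_succ, ← mul_assoc, ih, mul_assoc, hXQ, ← mul_assoc, ← pow_succ]
  have haeval : ∀ p : ℂ[X], W * aeval Q p = aeval (-P) p * W := by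
    intro p
    induction p using Polynomial.induction_on' with
    | add p q hp hq => rw [map_add, map_add, mul_add, add_mul, hp, hq]
    | monomial k a =>
      rw [aeval_monomial, aeval_monomial, ← mul_assoc, ← Algebra.commutes a W,
        mul_assoc, hpow, ← mul_assoc]
  have h0 : aeval (-P) Q.charpoly * W = 0 := by
    rw [← haeval, Matrix.aeval_self_charpoly, mul_zero]
  have hunit : IsUnit (aeval (-P) Q.charpoly) := by
    by_contra hnu
    have hsplit : Q.charpoly = (Q.charpoly.roots.map fun a => X - C a).prod :=
      (IsAlgClosed.splits Q.charpoly).eq_prod_roots_of_monic Q.charpoly_monic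
    rw [hsplit] at hnu
    obtain ⟨k, hk, hev⟩ := spectrum.exists_mem_of_not_isUnit_aeval_prod hnu
    have hkQ : k ∈ spectrum ℂ Q := mem_spectrum_of_root_aux Q k hev
    have hkP : -k ∈ spectrum ℂ P := by
      rw [← spectrum.neg_eq] at hk
      simpa using hk
    have h1 := hQ k hkQ
    have h2 := hP (-k) hkP
    simp only [Complex.neg_re] at h2
    linarith
  exact (hunit.mul_right_eq_zero).mp h0

theorem stmt18 {n m : ℕ} (A : Matrix (Fin n) (Fin n) ℝ) (B : Matrix (Fin n) (Fin m) ℝ)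
    (R : Matrix (Fin m) (Fin m) ℝ) (ρ : ℝ) (hρ : 0 < ρ) (hR : R.PosDef)
    (hA : IsHurwitz (A - (ρ / 2) • (1 : Matrix (Fin n) (Fin n) ℝ)))
    (Y : Matrix (Fin n) (Fin n) ℝ) (hY : Y.PosSemidef)
    (hare : ρ • Y = Y * A + Aᵀ * Y - Y * B * R⁻¹ * Bᵀ * Y)
    (hHur : IsHurwitz (A - B * R⁻¹ * Bᵀ * Y - (ρ / 2) • (1 : Matrix (Fin n) (Fin n) ℝ))) :
    Y = 0 := by
  set M : Matrix (Fin n) (Fin n) ℝ :=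
    A - B * R⁻¹ * Bᵀ * Y - (ρ / 2) • (1 : Matrix (Fin n) (Fin n) ℝ) with hM
  set N : Matrix (Fin n) (Fin n) ℝ :=
    A - (ρ / 2) • (1 : Matrix (Fin n) (Fin n) ℝ) with hN
  have hYs : Yᵀ = Y := by
    have := hY.isHermitian.eq
    rwa [Matrix.conjTranspose_eq_transpose_of_trivial] at this
  have hRs : Rᵀ = R := by
    have := hR.isHermitian.eq
    rwa [Matrix.conjTranspose_eq_transpose_of_trivial] at this
  have hRinv : R⁻¹ᵀ = R⁻¹ := by rw [Matrix.transpose_nonsing_inv, hRs]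
  -- the Sylvester equation Mᵀ Y + Y N = 0
  have hsyl : Mᵀ * Y + Y * N = 0 := by
    have hMT : Mᵀ = Aᵀ - Y * (B * R⁻¹ * Bᵀ) - (ρ / 2) • (1 : Matrix (Fin n) (Fin n) ℝ) := by
      rw [hM, Matrix.transpose_sub, Matrix.transpose_sub, Matrix.transpose_smul,
        Matrix.transpose_one]
      congr 1
      congr 1
      rw [Matrix.transpose_mul, Matrix.transpose_mul, Matrix.transpose_mul, hYs, hRinv,
        Matrix.transpose_transpose]
      rw [Matrix.mul_assoc B R⁻¹ Bᵀ]
    rw [hMT, hN]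
    have key : Y * A + Aᵀ * Y - Y * (B * R⁻¹ * Bᵀ) * Y = ρ • Y := by
      rw [hare]
      simp only [Matrix.mul_assoc]
    have expand : (Aᵀ - Y * (B * R⁻¹ * Bᵀ) - (ρ / 2) • (1 : Matrix (Fin n) (Fin n) ℝ)) * Y
        + Y * (A - (ρ / 2) • (1 : Matrix (Fin n) (Fin n) ℝ))
        = (Y * A + Aᵀ * Y - Y * (B * R⁻¹ * Bᵀ) * Y) - ρ • Y := by
      rw [Matrix.sub_mul, Matrix.sub_mul, Matrix.mul_sub, Matrix.smul_mul, Matrix.mul_smul,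
        Matrix.one_mul, Matrix.mul_one]
      module
    rw [expand, key, sub_self]
  -- complexify
  let φ : Matrix (Fin n) (Fin n) ℝ →+* Matrix (Fin n) (Fin n) ℂ :=
    (Complex.ofRealHom : ℝ →+* ℂ).mapMatrix
  have hφ : ∀ T : Matrix (Fin n) (Fin n) ℝ, φ T = T.map Complex.ofReal := fun T => rfl
  have hC : (Mᵀ.map Complex.ofReal) * (Y.map Complex.ofReal)
      + (Y.map Complex.ofReal) * (N.map Complex.ofReal) = 0 := by
    have := congrArg φ hsyl
    rw [map_add, _root_.map_mul, _root_.map_mul, map_zero] at this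
    simpa [hφ] using this
  have hPspec : ∀ μ ∈ spectrum ℂ (Mᵀ.map Complex.ofReal), μ.re < 0 := by
    intro μ hμ
    rw [Matrix.transpose_map, spectrum_transpose_aux] at hμ
    exact hHur μ hμ
  have hX0 : Y.map Complex.ofReal = 0 :=
    sylvester_zero_aux _ _ _ hPspec hA hC
  ext i j
  have := congrFun (congrFun hX0 i) j
  simpa [Matrix.map_apply, Complex.ofReal_eq_zero] using this
end
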